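/- An allocation O = (O_1, ..., O_n) of indivisible items is envy-freeable (i.e., can be made envy-free by some non-negative subsidy payments) if and only if its envy graph G_O contains no directed cycle of strictly positive total weight. -/

import Mathlib

open Finset

/-- The bundle of agent `i` under the assignment `f` of items to agents;
an assignment `f : Fin m → Fin n` encodes a complete allocation. -/
def bundle {n m : ℕ} (f : Fin m → Fin n) (i : Fin n) : Finset (Fin m) :=
  Finset.univ.filter fun o => f o = i

namespace EnvyAux

variable {n : ℕ}

/-- Weight of the length-`k` walk `c 0, c 1, …, c k`. -/
noncomputable def W (w : Fin n → Fin n → ℝ) (k : ℕ) (c : ℕ → Fin n) : ℝ :=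
  ∑ t ∈ Finset.range k, w (c t) (c (t + 1))

lemma W_succ (w : Fin n → Fin n → ℝ) (k : ℕ) (c : ℕ → Fin n) :
    W w (k + 1) c = W w k c + w (c k) (c (k + 1)) :=
  Finset.sum_range_succ _ _

lemma W_add (w : Fin n → Fin n → ℝ) (a b : ℕ) (c : ℕ → Fin n) :
    W w (a + b) c = W w a c + W w b (fun t => c (a + t)) := by
  induction b with
  | zero => simp [W]
  | succ b ih =>
      rw [show a + (b + 1) = (a + b) + 1 by omega, W_succ, ih, W_succ]
      have h1 : a + b + 1 = a + (b + 1) := by omega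
      rw [h1]
      ring

lemma W_congr {w : Fin n → Fin n → ℝ} {k : ℕ} {c₁ c₂ : ℕ → Fin n}
    (h : ∀ t ≤ k, c₁ t = c₂ t) : W w k c₁ = W w k c₂ := by
  refine Finset.sum_congr rfl fun t ht => ?_
  rw [Finset.mem_range] at ht
  rw [h t (by omega), h (t + 1) (by omega)]

/-- Main construction: if every simple cycle has nonpositive weight, there are
nonnegative payments `p` with `w i j ≤ p i - p j`. -/
lemma exists_payments (hn : 0 < n) (w : Fin n → Fin n → ℝ) (hww : ∀ i, w i i = 0)
    (hcyc : ∀ (k : ℕ) (hk : 2 ≤ k) (c : Fin k → Fin n), Function.Injective c →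
      ∑ t : Fin k, w (c t) (c ⟨((t : ℕ) + 1) % k, Nat.mod_lt _ (by omega)⟩) ≤ 0) :
    ∃ p : Fin n → ℝ, (∀ i, 0 ≤ p i) ∧ ∀ i j, w i j ≤ p i - p j := by
  classical
  set ext : (Fin (n + 1) → Fin n) → ℕ → Fin n :=
    fun g t => g ⟨min t n, by omega⟩ with hext
  set P : Fin n → Finset (Fin (n + 1) × (Fin (n + 1) → Fin n)) :=
    fun i => Finset.univ.filter fun x =>
      Set.InjOn (ext x.2) (Set.Iic (x.1 : ℕ)) ∧ ext x.2 0 = i with hP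
  have hPne : ∀ i, (P i).Nonempty := by
    intro i
    refine ⟨(0, fun _ => i), ?_⟩
    simp only [hP, Finset.mem_filter, Finset.mem_univ, true_and]
    constructor
    · intro a ha b hb _
      simp only [Set.mem_Iic, Fin.val_zero, Nat.le_zero] at ha hb
      omega
    · trivial
  set p : Fin n → ℝ := fun i => (P i).sup' (hPne i) (fun x => W w (x.1 : ℕ) (ext x.2)) with hp
  -- membership upper bound
  have hle : ∀ (i : Fin n) (k : ℕ) (c : ℕ → Fin n), k ≤ n → c 0 = i →
      Set.InjOn c (Set.Iic k) → W w k c ≤ p i := by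
    intro i k c hkn hc0 hinj
    have hkn' : k < n + 1 := by omega
    set g : Fin (n + 1) → Fin n := fun t => c (t : ℕ) with hg
    have hagree : ∀ t ≤ k, ext g t = c t := by
      intro t ht
      simp only [hext, hg]
      congr 1
      omega
    have hmem : (⟨k, hkn'⟩, g) ∈ P i := by
      simp only [hP, Finset.mem_filter, Finset.mem_univ, true_and]
      refine ⟨?_, ?_⟩
      · intro a ha b hb hab
        simp only [Set.mem_Iic] at ha hb
        rw [hagree a ha, hagree b hb] at hab
        exact hinj ha hb hab
      · rw [hagree 0 (by omega), hc0]
    have := Finset.le_sup' (fun x : Fin (n+1) × (Fin (n+1) → Fin n) =>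
        W w (x.1 : ℕ) (ext x.2)) hmem
    calc W w k c = W w k (ext g) := (W_congr hagree).symm
      _ ≤ p i := this
  have hp0 : ∀ i, 0 ≤ p i := by
    intro i
    have := hle i 0 (fun _ => i) (by omega) rfl (by
      intro a ha b hb _
      simp only [Set.mem_Iic, Nat.le_zero] at ha hb
      omega)
    simpa [W] using this
  have hkey : ∀ i j, w i j + p j ≤ p i := by
    intro i j
    rcases eq_or_ne i j with rfl | hij
    · simp [hww]
    obtain ⟨x, hxmem, hxval⟩ := Finset.exists_mem_eq_sup' (hPne j)
      (fun x : Fin (n+1) × (Fin (n+1) → Fin n) => W w (x.1 : ℕ) (ext x.2))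
    simp only [hP, Finset.mem_filter, Finset.mem_univ, true_and] at hxmem
    obtain ⟨hinj, hc0⟩ := hxmem
    set k : ℕ := (x.1 : ℕ) with hk
    set c : ℕ → Fin n := ext x.2 with hc
    have hkn : k ≤ n := by omega
    have hpj : p j = W w k c := hxval
    by_cases hmem : ∃ s, s ≤ k ∧ c s = i
    · -- i occurs on the path: extract a cycle
      obtain ⟨s, hsk, hcs⟩ := hmem
      have hs0 : 1 ≤ s := by
        rcases Nat.eq_zero_or_pos s with h | h
        · exact absurd (by rw [← hc0, ← hcs, h]) hij.symm
        · omega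
      set D : ℕ → Fin n := fun t => if t % (s + 1) = 0 then i else c (t % (s + 1) - 1)
        with hD
      have hDval : ∀ t ≤ s, D (1 + t) = c t := by
        intro t ht
        rcases eq_or_lt_of_le ht with rfl | ht'
        · simp only [hD]
          rw [show (1 + t) % (t + 1) = 0 by rw [Nat.add_comm]; exact Nat.mod_self _, if_pos rfl, hcs]
        · have h1 : (1 + t) % (s + 1) = 1 + t := Nat.mod_eq_of_lt (by omega)
          simp only [hD, h1]
          rw [if_neg (by omega)]
          congr 1
          omega
      have hD0 : D 0 = i := by simp [hD]
      -- the cycle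
      have hcycle : w i j + W w s c ≤ 0 := by
        have hinj' : Function.Injective (fun t : Fin (s + 1) => D (t : ℕ)) := by
          intro a b hab
          simp only [hD] at hab
          have ha : (a : ℕ) % (s + 1) = a := Nat.mod_eq_of_lt a.isLt
          have hb' : (b : ℕ) % (s + 1) = b := Nat.mod_eq_of_lt b.isLt
          rw [ha, hb'] at hab
          rcases eq_or_ne (a : ℕ) 0 with h0a | h0a <;> rcases eq_or_ne (b : ℕ) 0 with h0b | h0b
          · exact Fin.ext (by omega)
          · rw [if_pos h0a, if_neg h0b] at hab
            have : s = (b : ℕ) - 1 := hinj (by simp [Set.mem_Iic]; omega)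
              (by simp [Set.mem_Iic]; omega) (hcs.trans hab)
            omega
          · rw [if_neg h0a, if_pos h0b] at hab
            have : (a : ℕ) - 1 = s := hinj (by simp [Set.mem_Iic]; omega)
              (by simp [Set.mem_Iic]; omega) (hab.trans hcs.symm)
            omega
          · rw [if_neg h0a, if_neg h0b] at hab
            have : (a : ℕ) - 1 = (b : ℕ) - 1 := hinj (by simp [Set.mem_Iic]; omega)
              (by simp [Set.mem_Iic]; omega) hab
            exact Fin.ext (by omega)
        have h2 : 2 ≤ s + 1 := by omega
        have hbig := hcyc (s + 1) h2 (fun t : Fin (s + 1) => D (t : ℕ)) hinj'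
        have hconv : W w (s + 1) D ≤ 0 := by
          refine le_trans (le_of_eq ?_) hbig
          rw [W, ← Fin.sum_univ_eq_sum_range (fun t => w (D t) (D (t + 1))) (s + 1)]
          refine Finset.sum_congr rfl fun t _ => ?_
          show w (D (t : ℕ)) (D ((t : ℕ) + 1)) = w (D (t : ℕ)) (D (((t : ℕ) + 1) % (s + 1)))
          congr 1
          simp only [hD]
          rw [Nat.mod_mod_of_dvd _ dvd_rfl]
        have hsplit : W w (s + 1) D = w i j + W w s c := by
          rw [show s + 1 = 1 + s by omega, W_add]
          have hD1 : D 1 = j := by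
            have h1 : (1 : ℕ) % (s + 1) = 1 := Nat.mod_eq_of_lt (by omega)
            simp only [hD, h1, if_neg (Nat.one_ne_zero)]
            exact hc0
          have h1 : W w 1 D = w i j := by
            simp [W, Finset.sum_range_one, hD0, hD1]
          rw [h1, W_congr (fun t ht => hDval t ht)]
        rw [hsplit] at hconv
        exact hconv
      -- the suffix path
      set e : ℕ → Fin n := fun t => c (s + t) with he
      have he0 : e 0 = i := by simp [he, hcs]
      have heinj : Set.InjOn e (Set.Iic (k - s)) := by
        intro a ha b hb hab
        simp only [Set.mem_Iic] at ha hb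
        have : s + a = s + b := hinj (by simp only [Set.mem_Iic]; omega)
          (by simp only [Set.mem_Iic]; omega) hab
        omega
      have hsuf : W w (k - s) e ≤ p i := hle i (k - s) e (show k - s ≤ n by omega) he0 heinj
      have hsplit2 : W w k c = W w s c + W w (k - s) e := by
        have h := W_add w s (k - s) c
        rw [show s + (k - s) = k by omega] at h
        rw [h, he]
      rw [hpj, hsplit2]
      linarith
    · -- i does not occur: prepend it
      push_neg at hmem
      set c' : ℕ → Fin n := fun t => if t = 0 then i else c (t - 1) with hc'
      have hc'0 : c' 0 = i := by simp [hc']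
      have hc'inj : Set.InjOn c' (Set.Iic (k + 1)) := by
        intro a ha b hb hab
        simp only [Set.mem_Iic] at ha hb
        simp only [hc'] at hab
        rcases eq_or_ne a 0 with h0a | h0a <;> rcases eq_or_ne b 0 with h0b | h0b
        · omega
        · rw [if_pos h0a, if_neg h0b] at hab
          exact absurd hab.symm (hmem (b - 1) (by omega))
        · rw [if_neg h0a, if_pos h0b] at hab
          exact absurd hab (hmem (a - 1) (by omega))
        · rw [if_neg h0a, if_neg h0b] at hab
          have : a - 1 = b - 1 := hinj (by simp only [Set.mem_Iic]; omega)
            (by simp only [Set.mem_Iic]; omega) hab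
          omega
      have hcard : k + 1 ≤ n := by
        have h1 : (Finset.Iic (k + 1)).card = k + 2 := by
          rw [Nat.card_Iic]
        have himg : ((Finset.Iic (k + 1)).image c').card = k + 2 := by
          rw [Finset.card_image_of_injOn, h1]
          intro a ha b hb hab
          exact hc'inj (by simpa using ha) (by simpa using hb) hab
        have := Finset.card_le_card (Finset.subset_univ ((Finset.Iic (k + 1)).image c'))
        simp only [Finset.card_univ, Fintype.card_fin] at this
        omega
      have hWc' : W w (k + 1) c' = w i j + W w k c := by
        rw [show k + 1 = 1 + k by omega, W_add]
        have hc'1 : c' 1 = j := by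
          simp only [hc', if_neg (Nat.one_ne_zero)]
          exact hc0
        have h1 : W w 1 c' = w i j := by
          simp [W, Finset.sum_range_one, hc'0, hc'1]
        rw [h1]
        congr 1
        refine W_congr fun t ht => ?_
        simp only [hc']
        rw [if_neg (by omega)]
        congr 1
        omega
      have := hle i (k + 1) c' hcard hc'0 hc'inj
      rw [hWc'] at this
      linarith [hpj ▸ this]
  exact ⟨p, hp0, fun i j => by linarith [hkey i j]⟩

end EnvyAux

theorem envy_freeable_iff_no_positive_cycle (n m : ℕ)
    (u : Fin n → Finset (Fin m) → ℝ) (hu0 : ∀ i, u i ∅ = 0)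
    (f : Fin m → Fin n) :
    (∃ p : Fin n → ℝ, (∀ i, 0 ≤ p i) ∧
        ∀ i j : Fin n, u i (bundle f i) + p i ≥ u i (bundle f j) + p j) ↔
      (∀ (k : ℕ) (hk : 2 ≤ k) (c : Fin k → Fin n), Function.Injective c →
        ∑ t : Fin k,
          (u (c t) (bundle f (c ⟨((t : ℕ) + 1) % k, Nat.mod_lt _ (by omega)⟩)) -
            u (c t) (bundle f (c t))) ≤ 0) := by
  constructor
  · rintro ⟨p, hp0, hEF⟩ k hk c hcinj
    haveI : NeZero k := ⟨by omega⟩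
    have hidx : ∀ (t : Fin k) (h : ((t : ℕ) + 1) % k < k),
        (⟨((t : ℕ) + 1) % k, h⟩ : Fin k) = t + 1 := by
      intro t h
      have h1 : (1 : ℕ) % k = 1 := Nat.mod_eq_of_lt (by omega)
      apply Fin.ext
      simp only [Fin.add_def, Fin.val_one', h1]
    have htele : ∑ t : Fin k, (p (c t) - p (c (t + 1))) = 0 := by
      rw [Finset.sum_sub_distrib]
      have h : ∑ t : Fin k, p (c (t + 1)) = ∑ t : Fin k, p (c t) :=
        Fintype.sum_equiv (Equiv.addRight (1 : Fin k)) _ _ (fun t => rfl)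
      rw [h, sub_self]
    refine le_trans (Finset.sum_le_sum ?_) (le_of_eq htele)
    intro t _
    rw [hidx t _]
    have := hEF (c t) (c (t + 1))
    linarith
  · intro hcyc
    rcases Nat.eq_zero_or_pos n with hn | hn
    · subst hn
      exact ⟨fun i => 0, fun i => le_refl _, fun i => i.elim0⟩
    obtain ⟨p, hp0, hpw⟩ := EnvyAux.exists_payments hn
      (fun i j => u i (bundle f j) - u i (bundle f i)) (fun i => sub_self _)
      (fun k hk c hc => hcyc k hk c hc)
    exact ⟨p, hp0, fun i j => by have := hpw i j; linarith⟩
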